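/- arXiv:2406.06945 — 2 statements merged into one kernel-verified Lean document; each statement's English description precedes it below -/
import Mathlib

section
/- Let Y be a real-valued random variable with all absolute moments finite and fix a nonzero real λ. Then for every real number x and every integer n≥0, (1/2)(Σ_{l=0}^{n} C(n,l) 𝓔_{l,λ}^Y(x) E[(Y)_{n−l,λ}] + 𝓔_{n,λ}^Y(x)) = Σ_{k=0}^{n} ⟨x⟩_{k,λ} (−1)^{n−k} S_{1,λ}^Y(n,k) = Σ_{k=0}^{n} (x)_{k,λ} Σ_{m=k}^{n} S_{1,λ}(m,k) {n brace m}_{Y,λ}, where C(n,l) is the binomial coefficient. -/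
open MeasureTheory Finset

noncomputable section

/-- The degenerate falling factorial `(x)_{n,λ} = x(x-λ)⋯(x-(n-1)λ)`. -/
def dff (lam x : ℝ) (n : ℕ) : ℝ := ∏ i ∈ Finset.range n, (x - i * lam)

/-- The degenerate rising factorial `⟨x⟩_{n,λ} = x(x+λ)⋯(x+(n-1)λ)`. -/
def drf (lam x : ℝ) (n : ℕ) : ℝ := ∏ i ∈ Finset.range n, (x + i * lam)

/-- The ordinary falling factorial `(x)_n = x(x-1)⋯(x-n+1)`. -/
def ffall (x : ℝ) (n : ℕ) : ℝ := ∏ i ∈ Finset.range n, (x - i)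

/-- The ordinary rising factorial `⟨x⟩_n = x(x+1)⋯(x+n-1)`. -/
def frise (x : ℝ) (n : ℕ) : ℝ := ∏ i ∈ Finset.range n, (x + i)

/-- Composition `f ∘ g` of formal power series, valid when `g` has zero constant term. -/
def pscomp (f g : PowerSeries ℝ) : PowerSeries ℝ :=
  PowerSeries.mk fun n =>
    ∑ k ∈ Finset.range (n + 1), PowerSeries.coeff (R := ℝ) k f * PowerSeries.coeff (R := ℝ) n (g ^ k)

/-- The degenerate moment generating series `F_Y = Σ_{n≥0} E[(Y)_{n,λ}] X^n/n!`. -/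
def momSeries (lam : ℝ) {Ω : Type*} [MeasurableSpace Ω] (μ : Measure Ω) (Y : Ω → ℝ) :
    PowerSeries ℝ :=
  PowerSeries.mk fun n => (∫ ω, dff lam (Y ω) n ∂μ) / (n.factorial : ℝ)

/-- Taylor series at `u = 0` of the degenerate logarithm `log_λ(1+u)`:
`Σ_{n≥1} λ^{n-1} (1)_{n,1/λ} u^n/n!`. -/
def degLogSeries (lam : ℝ) : PowerSeries ℝ :=
  PowerSeries.mk fun n => if n = 0 then 0 else lam ^ (n - 1) * dff (1 / lam) 1 n / (n.factorial : ℝ)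

/-- `G_Y`, the degenerate cumulant generating series `log_{-λ}(F_Y)`, i.e. the substitution of
`F_Y - 1` into the Taylor series of `log_{-λ}(1+u)`. -/
def cumSeries (lam : ℝ) {Ω : Type*} [MeasurableSpace Ω] (μ : Measure Ω) (Y : Ω → ℝ) :
    PowerSeries ℝ :=
  pscomp (degLogSeries (-lam)) (momSeries lam μ Y - 1)

/-- The degenerate cumulants `κ_{n,λ}(Y) := n!·(coefficient of X^n in G_Y)`. -/
def degCumulant (lam : ℝ) {Ω : Type*} [MeasurableSpace Ω] (μ : Measure Ω) (Y : Ω → ℝ)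
    (n : ℕ) : ℝ :=
  (n.factorial : ℝ) * PowerSeries.coeff (R := ℝ) n (cumSeries lam μ Y)

/-- The probabilistic degenerate Stirling numbers of the second kind
`{n brace k}_{Y,λ} := n!·(coefficient of X^n in (F_Y - 1)^k/k!)`. -/
def braceY (lam : ℝ) {Ω : Type*} [MeasurableSpace Ω] (μ : Measure Ω) (Y : Ω → ℝ)
    (n k : ℕ) : ℝ :=
  (n.factorial : ℝ) * PowerSeries.coeff (R := ℝ) n ((momSeries lam μ Y - 1) ^ k) / (k.factorial : ℝ)

/-- The probabilistic degenerate Stirling numbers of the first kind, defined by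
`(-1)^{n-k} S_{1,λ}^Y(n,k) := n!·(coefficient of X^n in G_Y^k/k!)`. -/
def S1Y (lam : ℝ) {Ω : Type*} [MeasurableSpace Ω] (μ : Measure Ω) (Y : Ω → ℝ)
    (n k : ℕ) : ℝ :=
  (-1 : ℝ) ^ (n - k) * ((n.factorial : ℝ) * PowerSeries.coeff (R := ℝ) n ((cumSeries lam μ Y) ^ k) / (k.factorial : ℝ))

/-- Taylor series of `log(1+u)`: `Σ_{n≥1} (-1)^{n-1} u^n/n`. -/
def logSeries : PowerSeries ℝ :=
  PowerSeries.mk fun n => if n = 0 then 0 else (-1 : ℝ) ^ (n - 1) / n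

/-- `F^x := exp (x · Log F)` for a power series `F` with constant term `1`. -/
def psPow (F : PowerSeries ℝ) (x : ℝ) : PowerSeries ℝ :=
  pscomp (PowerSeries.exp ℝ) (PowerSeries.C (R := ℝ) x * pscomp logSeries (F - 1))

/-- `F ↦ F/X`, i.e. the shift sending `Σ a_{n+1} X^{n+1}` (with `a_0 = 0`) to `Σ a_{n+1} X^n`. -/
def shiftDown (F : PowerSeries ℝ) : PowerSeries ℝ :=
  PowerSeries.mk fun n => PowerSeries.coeff (R := ℝ) (n + 1) F

/-- The probabilistic degenerate Bernoulli polynomials associated with `Y`: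
`Σ_{n≥0} β_{n,λ}^Y(x) X^n/n! = (X/(F_Y-1))·F_Y^x`. -/
def probBernoulli (lam : ℝ) {Ω : Type*} [MeasurableSpace Ω] (μ : Measure Ω) (Y : Ω → ℝ)
    (n : ℕ) (x : ℝ) : ℝ :=
  (n.factorial : ℝ) *
    PowerSeries.coeff (R := ℝ) n ((shiftDown (momSeries lam μ Y - 1))⁻¹ * psPow (momSeries lam μ Y) x)

/-- The probabilistic degenerate Euler polynomials associated with `Y`:
`Σ_{n≥0} 𝓔_{n,λ}^Y(x) X^n/n! = (2/(F_Y+1))·F_Y^x`. -/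
def probEuler (lam : ℝ) {Ω : Type*} [MeasurableSpace Ω] (μ : Measure Ω) (Y : Ω → ℝ)
    (n : ℕ) (x : ℝ) : ℝ :=
  (n.factorial : ℝ) *
    PowerSeries.coeff (R := ℝ) n
      (PowerSeries.C (R := ℝ) 2 * (momSeries lam μ Y + 1)⁻¹ * psPow (momSeries lam μ Y) x)

namespace Aux
open PowerSeries Finset

lemma coeff_pscomp (f g : PowerSeries ℝ) (n : ℕ) :
    PowerSeries.coeff (R := ℝ) n (pscomp f g) =
      ∑ k ∈ Finset.range (n + 1), PowerSeries.coeff (R := ℝ) k f * PowerSeries.coeff (R := ℝ) n (g ^ k) := by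
  simp [pscomp]

lemma coeff_pow_eq_zero {g : PowerSeries ℝ} (hg : PowerSeries.constantCoeff (R := ℝ) g = 0)
    {n k : ℕ} (h : n < k) : PowerSeries.coeff (R := ℝ) n (g ^ k) = 0 := by
  obtain ⟨q, hq⟩ : (PowerSeries.X : PowerSeries ℝ) ^ k ∣ g ^ k :=
    pow_dvd_pow_of_dvd (PowerSeries.X_dvd_iff.2 hg) k
  rw [hq, PowerSeries.coeff_mul]
  apply Finset.sum_eq_zero
  rintro ⟨a, b⟩ hab
  have ha : a ≤ n := (Finset.HasAntidiagonal.antidiagonal.fst_le hab)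
  rw [PowerSeries.coeff_X_pow]
  simp only [Prod.fst]
  rw [if_neg (by omega), zero_mul]

lemma constantCoeff_pscomp (f g : PowerSeries ℝ) :
    PowerSeries.constantCoeff (R := ℝ) (pscomp f g) = PowerSeries.constantCoeff (R := ℝ) f := by
  rw [← PowerSeries.coeff_zero_eq_constantCoeff_apply, coeff_pscomp]
  simp

lemma pscomp_add (f₁ f₂ g : PowerSeries ℝ) :
    pscomp (f₁ + f₂) g = pscomp f₁ g + pscomp f₂ g := by
  ext n
  simp [coeff_pscomp, add_mul, Finset.sum_add_distrib]

lemma pscomp_sub (f₁ f₂ g : PowerSeries ℝ) :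
    pscomp (f₁ - f₂) g = pscomp f₁ g - pscomp f₂ g := by
  ext n
  simp [coeff_pscomp, sub_mul, Finset.sum_sub_distrib]

lemma pscomp_C_mul (a : ℝ) (f g : PowerSeries ℝ) :
    pscomp (PowerSeries.C (R := ℝ) a * f) g = PowerSeries.C (R := ℝ) a * pscomp f g := by
  ext n
  simp [coeff_pscomp, PowerSeries.coeff_C_mul, Finset.mul_sum, mul_assoc]

lemma pscomp_one (g : PowerSeries ℝ) : pscomp 1 g = 1 := by
  ext n
  rw [coeff_pscomp]
  rw [Finset.sum_eq_single 0]
  · simp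
  · intro k hk hk0
    rw [PowerSeries.coeff_one, if_neg hk0, zero_mul]
  · simp

lemma pscomp_C (a : ℝ) (g : PowerSeries ℝ) : pscomp (PowerSeries.C (R := ℝ) a) g = PowerSeries.C (R := ℝ) a := by
  have := pscomp_C_mul a 1 g
  rw [mul_one, pscomp_one, mul_one] at this
  exact this

lemma pscomp_X {g : PowerSeries ℝ} (hg : PowerSeries.constantCoeff (R := ℝ) g = 0) :
    pscomp PowerSeries.X g = g := by
  ext n
  rw [coeff_pscomp]
  rcases Nat.eq_zero_or_pos n with rfl | hn
  · simp [hg]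
  · rw [Finset.sum_eq_single 1]
    · simp
    · intro k hk hk1
      rw [PowerSeries.coeff_X, if_neg hk1, zero_mul]
    · intro h
      exact absurd (Finset.mem_range.2 (by omega)) h

/-- triangle sum: antidiagonal double sum equals square double sum when vanishing above. -/
lemma triangle_sum (n : ℕ) (h : ℕ → ℕ → ℝ) (hv : ∀ i j, n < i + j → h i j = 0) :
    ∑ m ∈ Finset.range (n + 1), ∑ p ∈ Finset.HasAntidiagonal.antidiagonal m, h p.1 p.2 =
      ∑ i ∈ Finset.range (n + 1), ∑ j ∈ Finset.range (n + 1), h i j := by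
  rw [← Finset.sum_sigma (Finset.range (n+1)) (fun m => Finset.HasAntidiagonal.antidiagonal m) (fun x => h x.2.1 x.2.2)]
  rw [← Finset.sum_product']
  rw [← Finset.sum_filter_add_sum_filter_not
      ((Finset.range (n+1)) ×ˢ (Finset.range (n+1))) (fun p => p.1 + p.2 ≤ n)]
  have h2 : ∑ p ∈ ((Finset.range (n+1)) ×ˢ (Finset.range (n+1))).filter
      (fun p => ¬ (p.1 + p.2 ≤ n)), h p.1 p.2 = 0 := by
    apply Finset.sum_eq_zero
    rintro ⟨i, j⟩ hp
    simp only [Finset.mem_filter, Finset.mem_product, Finset.mem_range, not_le] at hp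
    exact hv i j hp.2
  rw [h2, add_zero]
  apply Finset.sum_nbij' (i := fun x => (x.2.1, x.2.2)) (j := fun p => ⟨p.1 + p.2, p⟩)
  · rintro ⟨m, i, j⟩ hx
    simp only [Finset.mem_sigma, Finset.mem_range, Finset.HasAntidiagonal.mem_antidiagonal] at hx
    simp only [Finset.mem_filter, Finset.mem_product, Finset.mem_range]
    omega
  · rintro ⟨i, j⟩ hp
    simp only [Finset.mem_filter, Finset.mem_product, Finset.mem_range] at hp
    exact Finset.mem_sigma.2 ⟨Finset.mem_range.2 (by show i + j < n + 1; omega), Finset.HasAntidiagonal.mem_antidiagonal.2 rfl⟩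
  · rintro ⟨m, i, j⟩ hx
    simp only [Finset.mem_sigma, Finset.mem_range, Finset.HasAntidiagonal.mem_antidiagonal] at hx
    simp only [Sigma.mk.inj_iff]
    exact ⟨hx.2, heq_of_eq rfl⟩
  · rintro ⟨i, j⟩ _; rfl
  · rintro ⟨m, i, j⟩ _; rfl

/-- swap helper: antidiagonal-then-truncated-range to range-then-antidiagonal. -/
lemma swap_sum (n : ℕ) (H : ℕ → ℕ → ℕ → ℝ) (hv : ∀ k a b, a < k → H k a b = 0) :
    ∑ p ∈ Finset.HasAntidiagonal.antidiagonal n, ∑ k ∈ Finset.range (p.1 + 1), H k p.1 p.2 =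
      ∑ k ∈ Finset.range (n + 1), ∑ p ∈ Finset.HasAntidiagonal.antidiagonal n, H k p.1 p.2 := by
  have step : ∀ p ∈ Finset.HasAntidiagonal.antidiagonal n,
      ∑ k ∈ Finset.range (p.1 + 1), H k p.1 p.2 =
        ∑ k ∈ Finset.range (n + 1), H k p.1 p.2 := by
    rintro ⟨a, b⟩ hab
    have ha : a ≤ n := Finset.HasAntidiagonal.antidiagonal.fst_le hab
    apply Finset.sum_subset
    · intro k hk
      simp only [Finset.mem_range] at hk ⊢
      omega
    · intro k _ hk
      exact hv k a b (by simp only [Finset.mem_range] at hk; omega)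
  rw [Finset.sum_congr rfl step, Finset.sum_comm]

lemma pscomp_mul (f₁ f₂ : PowerSeries ℝ) {g : PowerSeries ℝ}
    (hg : PowerSeries.constantCoeff (R := ℝ) g = 0) :
    pscomp (f₁ * f₂) g = pscomp f₁ g * pscomp f₂ g := by
  ext n
  rw [coeff_pscomp, PowerSeries.coeff_mul]
  -- RHS side first
  have hR : ∑ p ∈ Finset.HasAntidiagonal.antidiagonal n,
      PowerSeries.coeff (R := ℝ) p.1 (pscomp f₁ g) * PowerSeries.coeff (R := ℝ) p.2 (pscomp f₂ g) =
      ∑ i ∈ Finset.range (n+1), ∑ j ∈ Finset.range (n+1),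
        (PowerSeries.coeff (R := ℝ) i f₁ * PowerSeries.coeff (R := ℝ) j f₂) * PowerSeries.coeff (R := ℝ) n (g ^ (i+j)) := by
    have step1 : ∀ p ∈ Finset.HasAntidiagonal.antidiagonal n,
        PowerSeries.coeff (R := ℝ) p.1 (pscomp f₁ g) * PowerSeries.coeff (R := ℝ) p.2 (pscomp f₂ g) =
        ∑ i ∈ Finset.range (n+1), ∑ j ∈ Finset.range (n+1),
          (PowerSeries.coeff (R := ℝ) i f₁ * PowerSeries.coeff (R := ℝ) j f₂) *
            (PowerSeries.coeff (R := ℝ) p.1 (g ^ i) * PowerSeries.coeff (R := ℝ) p.2 (g ^ j)) := by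
      rintro ⟨a, b⟩ hab
      have ha : a ≤ n := Finset.HasAntidiagonal.antidiagonal.fst_le hab
      have hb : b ≤ n := Finset.HasAntidiagonal.antidiagonal.snd_le hab
      rw [coeff_pscomp, coeff_pscomp]
      rw [show ∑ k ∈ Finset.range (a + 1), PowerSeries.coeff (R := ℝ) k f₁ * PowerSeries.coeff (R := ℝ) a (g ^ k)
            = ∑ k ∈ Finset.range (n + 1), PowerSeries.coeff (R := ℝ) k f₁ * PowerSeries.coeff (R := ℝ) a (g ^ k) from
        Finset.sum_subset (by intro k hk; simp only [Finset.mem_range] at *; omega)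
          (fun k _ hk => by rw [coeff_pow_eq_zero hg (by simp only [Finset.mem_range] at hk; omega), mul_zero])]
      rw [show ∑ k ∈ Finset.range (b + 1), PowerSeries.coeff (R := ℝ) k f₂ * PowerSeries.coeff (R := ℝ) b (g ^ k)
            = ∑ k ∈ Finset.range (n + 1), PowerSeries.coeff (R := ℝ) k f₂ * PowerSeries.coeff (R := ℝ) b (g ^ k) from
        Finset.sum_subset (by intro k hk; simp only [Finset.mem_range] at *; omega)
          (fun k _ hk => by rw [coeff_pow_eq_zero hg (by simp only [Finset.mem_range] at hk; omega), mul_zero])]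
      rw [Finset.sum_mul_sum]
      apply Finset.sum_congr rfl; intro i _
      apply Finset.sum_congr rfl; intro j _
      ring
    rw [Finset.sum_congr rfl step1, Finset.sum_comm]
    apply Finset.sum_congr rfl; intro i _
    rw [Finset.sum_comm]
    apply Finset.sum_congr rfl; intro j _
    rw [← Finset.mul_sum, pow_add, PowerSeries.coeff_mul]
  rw [hR]
  -- LHS side
  have hL : ∑ k ∈ Finset.range (n + 1),
      PowerSeries.coeff (R := ℝ) k (f₁ * f₂) * PowerSeries.coeff (R := ℝ) n (g ^ k) =
      ∑ m ∈ Finset.range (n+1), ∑ p ∈ Finset.HasAntidiagonal.antidiagonal m,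
        (PowerSeries.coeff (R := ℝ) p.1 f₁ * PowerSeries.coeff (R := ℝ) p.2 f₂) * PowerSeries.coeff (R := ℝ) n (g ^ (p.1 + p.2)) := by
    apply Finset.sum_congr rfl
    intro m _
    rw [PowerSeries.coeff_mul, Finset.sum_mul]
    apply Finset.sum_congr rfl
    rintro ⟨i, j⟩ hij
    rw [Finset.HasAntidiagonal.mem_antidiagonal.1 hij]
  rw [hL]
  exact triangle_sum n
    (fun i j => PowerSeries.coeff (R := ℝ) i f₁ * PowerSeries.coeff (R := ℝ) j f₂ * PowerSeries.coeff (R := ℝ) n (g ^ (i + j)))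
    (fun i j hij => by rw [coeff_pow_eq_zero hg hij, mul_zero])

/-- Chain rule for `pscomp`. -/
lemma derivative_pscomp (f : PowerSeries ℝ) {g : PowerSeries ℝ}
    (hg : PowerSeries.constantCoeff (R := ℝ) g = 0) :
    d⁄dX ℝ (pscomp f g) = pscomp (d⁄dX ℝ f) g * d⁄dX ℝ g := by
  ext n
  rw [PowerSeries.coeff_derivative, coeff_pscomp, PowerSeries.coeff_mul]
  have hR : ∑ p ∈ Finset.HasAntidiagonal.antidiagonal n,
      PowerSeries.coeff (R := ℝ) p.1 (pscomp (d⁄dX ℝ f) g) * PowerSeries.coeff (R := ℝ) p.2 (d⁄dX ℝ g) =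
      ∑ k ∈ Finset.range (n + 1), PowerSeries.coeff (R := ℝ) k (d⁄dX ℝ f) *
        PowerSeries.coeff (R := ℝ) n (g ^ k * d⁄dX ℝ g) := by
    have step : ∀ p ∈ Finset.HasAntidiagonal.antidiagonal n,
        PowerSeries.coeff (R := ℝ) p.1 (pscomp (d⁄dX ℝ f) g) * PowerSeries.coeff (R := ℝ) p.2 (d⁄dX ℝ g)
        = ∑ k ∈ Finset.range (p.1 + 1), (PowerSeries.coeff (R := ℝ) k (d⁄dX ℝ f) *
            (PowerSeries.coeff (R := ℝ) p.1 (g ^ k) * PowerSeries.coeff (R := ℝ) p.2 (d⁄dX ℝ g))) := by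
      rintro ⟨a, b⟩ hab
      rw [coeff_pscomp, Finset.sum_mul]
      exact Finset.sum_congr rfl fun k _ => by ring
    rw [Finset.sum_congr rfl step,
      swap_sum n (fun k a b => PowerSeries.coeff (R := ℝ) k (d⁄dX ℝ f) *
        (PowerSeries.coeff (R := ℝ) a (g ^ k) * PowerSeries.coeff (R := ℝ) b (d⁄dX ℝ g)))
        (fun k a b hak => by rw [coeff_pow_eq_zero hg hak, zero_mul, mul_zero])]
    apply Finset.sum_congr rfl
    intro k _
    rw [← Finset.mul_sum, PowerSeries.coeff_mul]
  rw [hR]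
  have term : ∀ k ∈ Finset.range (n+1),
      PowerSeries.coeff (R := ℝ) k (d⁄dX ℝ f) * PowerSeries.coeff (R := ℝ) n (g ^ k * d⁄dX ℝ g) =
      PowerSeries.coeff (R := ℝ) (k+1) f * PowerSeries.coeff (R := ℝ) (n+1) (g ^ (k+1)) * (n+1) := by
    intro k _
    have hpow : d⁄dX ℝ (g ^ (k+1)) = (k+1) • (g ^ k * d⁄dX ℝ g) := by
      rw [Derivation.leibniz_pow]
      simp [smul_eq_mul]
    have h1 : ((k:ℝ)+1) * PowerSeries.coeff (R := ℝ) n (g ^ k * d⁄dX ℝ g)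
        = PowerSeries.coeff (R := ℝ) (n+1) (g ^ (k+1)) * ((n:ℝ)+1) := by
      have h2 := PowerSeries.coeff_derivative (g ^ (k+1)) n
      rw [hpow, map_nsmul, nsmul_eq_mul] at h2
      push_cast at h2
      linarith [h2]
    rw [PowerSeries.coeff_derivative]
    calc PowerSeries.coeff (R := ℝ) (k+1) f * ((k:ℝ)+1) * PowerSeries.coeff (R := ℝ) n (g ^ k * d⁄dX ℝ g)
        = PowerSeries.coeff (R := ℝ) (k+1) f * (((k:ℝ)+1) * PowerSeries.coeff (R := ℝ) n (g ^ k * d⁄dX ℝ g)) := by ring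
      _ = PowerSeries.coeff (R := ℝ) (k+1) f * (PowerSeries.coeff (R := ℝ) (n+1) (g ^ (k+1)) * ((n:ℝ)+1)) := by rw [h1]
      _ = PowerSeries.coeff (R := ℝ) (k+1) f * PowerSeries.coeff (R := ℝ) (n+1) (g ^ (k+1)) * ((n:ℝ)+1) := by ring
  rw [Finset.sum_congr rfl term]
  rw [Finset.sum_mul, Finset.sum_range_succ' (fun k => PowerSeries.coeff (R := ℝ) k f *
    PowerSeries.coeff (R := ℝ) (n+1) (g ^ k) * ((n:ℝ)+1)) (n+1)]
  simp [pow_zero, PowerSeries.coeff_one]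

/-- uniqueness for the first-order linear ODE with unit leading coefficient. -/
lemma ode_unique {u A Δ : PowerSeries ℝ} (hu : PowerSeries.constantCoeff (R := ℝ) u = 0)
    (hode : (1 + u) * d⁄dX ℝ Δ = A * Δ) (h0 : PowerSeries.constantCoeff (R := ℝ) Δ = 0) :
    Δ = 0 := by
  have key : ∀ n, PowerSeries.coeff (R := ℝ) n Δ = 0 := by
    intro n
    induction n using Nat.strong_induction_on with
    | _ n ih =>
      match n with
      | 0 => rw [PowerSeries.coeff_zero_eq_constantCoeff]; exact h0
      | (m+1) =>
        have hc := congrArg (PowerSeries.coeff (R := ℝ) m) hode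
        rw [add_mul, one_mul, map_add, PowerSeries.coeff_mul, PowerSeries.coeff_mul] at hc
        have hz1 : ∑ p ∈ Finset.HasAntidiagonal.antidiagonal m,
            PowerSeries.coeff (R := ℝ) p.1 u * PowerSeries.coeff (R := ℝ) p.2 (d⁄dX ℝ Δ) = 0 := by
          apply Finset.sum_eq_zero
          rintro ⟨a, b⟩ hab
          have hab' : a + b = m := Finset.HasAntidiagonal.mem_antidiagonal.1 hab
          rcases Nat.eq_zero_or_pos a with rfl | ha
          · rw [PowerSeries.coeff_zero_eq_constantCoeff, hu, zero_mul]
          · rw [PowerSeries.coeff_derivative, ih (b+1) (by omega), zero_mul, mul_zero]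
        have hz2 : ∑ p ∈ Finset.HasAntidiagonal.antidiagonal m,
            PowerSeries.coeff (R := ℝ) p.1 A * PowerSeries.coeff (R := ℝ) p.2 Δ = 0 := by
          apply Finset.sum_eq_zero
          rintro ⟨a, b⟩ hab
          have hab' : a + b = m := Finset.HasAntidiagonal.mem_antidiagonal.1 hab
          rw [ih b (by omega), mul_zero]
        rw [hz1, hz2, add_zero, PowerSeries.coeff_derivative] at hc
        have : ((m : ℝ) + 1) ≠ 0 := by positivity
        exact by
          have := mul_eq_zero.1 hc
          tauto
  ext n
  rw [key n, map_zero]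

def binom (y : ℝ) : PowerSeries ℝ := PowerSeries.mk fun m => ffall y m / (m.factorial : ℝ)

lemma ffall_succ (y : ℝ) (n : ℕ) : ffall y (n+1) = ffall y n * (y - n) := by
  rw [ffall, Finset.prod_range_succ, ffall]

lemma ffall_zero (y : ℝ) : ffall y 0 = 1 := by simp [ffall]

lemma ffall_one (y : ℝ) : ffall y 1 = y := by simp [ffall]

lemma constantCoeff_binom (y : ℝ) : PowerSeries.constantCoeff (R := ℝ) (binom y) = 1 := by
  rw [← PowerSeries.coeff_zero_eq_constantCoeff_apply]
  simp [binom, ffall_zero]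

lemma constantCoeff_logSeries : PowerSeries.constantCoeff (R := ℝ) logSeries = 0 := by
  rw [← PowerSeries.coeff_zero_eq_constantCoeff_apply]
  simp [logSeries]

lemma constantCoeff_degLogSeries (lam : ℝ) :
    PowerSeries.constantCoeff (R := ℝ) (degLogSeries lam) = 0 := by
  rw [← PowerSeries.coeff_zero_eq_constantCoeff_apply]
  simp [degLogSeries]

lemma derivative_exp : d⁄dX ℝ (PowerSeries.exp ℝ) = PowerSeries.exp ℝ := by
  ext n
  rw [PowerSeries.coeff_derivative, PowerSeries.coeff_exp, PowerSeries.coeff_exp]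
  have h1 : ((n+1).factorial : ℚ) ≠ 0 := Nat.cast_ne_zero.2 (Nat.factorial_ne_zero _)
  have h2 : ((n).factorial : ℚ) ≠ 0 := Nat.cast_ne_zero.2 (Nat.factorial_ne_zero _)
  rw [Nat.factorial_succ]
  push_cast
  field_simp

lemma one_add_X_mul_derivative_logSeries :
    (1 + PowerSeries.X) * d⁄dX ℝ logSeries = 1 := by
  ext n
  rw [add_mul, one_mul, map_add]
  cases n with
  | zero =>
    rw [PowerSeries.coeff_zero_X_mul, add_zero, PowerSeries.coeff_derivative]
    simp [logSeries]
  | succ m =>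
    rw [PowerSeries.coeff_succ_X_mul, PowerSeries.coeff_derivative, PowerSeries.coeff_derivative]
    have hm1 : ((m : ℝ) + 1) ≠ 0 := by positivity
    have hm2 : ((m : ℝ) + 2) ≠ 0 := by positivity
    simp only [logSeries, PowerSeries.coeff_mk, Nat.succ_ne_zero, if_neg, Nat.add_sub_cancel,
      if_false]
    rw [PowerSeries.coeff_one, if_neg (by omega : ¬ (m + 1 = 0))]
    push_cast
    field_simp
    ring

lemma one_add_X_mul_derivative_binom (y : ℝ) :
    (1 + PowerSeries.X) * d⁄dX ℝ (binom y) = PowerSeries.C (R := ℝ) y * binom y := by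
  ext n
  rw [add_mul, one_mul, map_add, PowerSeries.coeff_C_mul]
  cases n with
  | zero =>
    rw [PowerSeries.coeff_zero_X_mul, add_zero, PowerSeries.coeff_derivative]
    simp [binom, ffall_zero, ffall_one]
  | succ m =>
    rw [PowerSeries.coeff_succ_X_mul, PowerSeries.coeff_derivative, PowerSeries.coeff_derivative]
    simp only [binom, PowerSeries.coeff_mk]
    have h1 : ((m+1).factorial : ℝ) ≠ 0 := Nat.cast_ne_zero.2 (Nat.factorial_ne_zero _)
    have h2 : ((m).factorial : ℝ) ≠ 0 := Nat.cast_ne_zero.2 (Nat.factorial_ne_zero _)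
    rw [ffall_succ y (m+1), Nat.factorial_succ (m+1), Nat.factorial_succ m]
    push_cast
    field_simp
    ring

lemma degLogSeries_eq {mu : ℝ} (hmu : mu ≠ 0) :
    degLogSeries mu = PowerSeries.C (R := ℝ) (1 / mu) * (binom mu - 1) := by
  have key : ∀ m : ℕ, mu ^ m * dff (1 / mu) 1 m = ffall mu m := by
    intro m
    induction m with
    | zero => simp [dff, ffall]
    | succ k ih =>
      rw [dff, ffall, Finset.prod_range_succ, Finset.prod_range_succ, ← dff, ← ffall, ← ih,
        pow_succ]
      field_simp
  ext n
  rw [PowerSeries.coeff_C_mul, map_sub]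
  cases n with
  | zero =>
    simp [degLogSeries, binom, ffall_zero]
  | succ m =>
    rw [PowerSeries.coeff_one, if_neg (Nat.succ_ne_zero m)]
    simp only [degLogSeries, binom, PowerSeries.coeff_mk, if_neg (Nat.succ_ne_zero m),
      Nat.add_sub_cancel, sub_zero]
    have hkey := key (m+1)
    have : mu ^ m * dff (1 / mu) 1 (m+1) = ffall mu (m+1) / mu := by
      rw [eq_div_iff hmu]
      calc mu ^ m * dff (1 / mu) 1 (m + 1) * mu = mu ^ (m+1) * dff (1/mu) 1 (m+1) := by ring
        _ = ffall mu (m+1) := key (m+1)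
    rw [this]
    ring

lemma one_add_eq_pscomp {u : PowerSeries ℝ} (hu : PowerSeries.constantCoeff (R := ℝ) u = 0) :
    (1 + u) = pscomp (1 + PowerSeries.X) u := by
  rw [pscomp_add, pscomp_one, pscomp_X hu]

lemma inv_rel {u : PowerSeries ℝ} (hu : PowerSeries.constantCoeff (R := ℝ) u = 0) :
    (1 + u) * pscomp (d⁄dX ℝ logSeries) u = 1 := by
  rw [one_add_eq_pscomp hu, ← pscomp_mul _ _ hu, one_add_X_mul_derivative_logSeries, pscomp_one]

/-- Lemma A : the binomial series identity `exp (y log (1+u)) = (1+u)^y`. -/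
lemma lemmaA (y : ℝ) {u : PowerSeries ℝ} (hu : PowerSeries.constantCoeff (R := ℝ) u = 0) :
    pscomp (PowerSeries.exp ℝ) (PowerSeries.C (R := ℝ) y * pscomp logSeries u) =
      pscomp (binom y) u := by
  set L := pscomp logSeries u with hLdef
  have hL0 : PowerSeries.constantCoeff (R := ℝ) L = 0 := by
    rw [hLdef, constantCoeff_pscomp, constantCoeff_logSeries]
  have hg : PowerSeries.constantCoeff (R := ℝ) (PowerSeries.C (R := ℝ) y * L) = 0 := by
    rw [map_mul, hL0, mul_zero]
  set P := pscomp (PowerSeries.exp ℝ) (PowerSeries.C (R := ℝ) y * L) with hPdef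
  set Q := pscomp (binom y) u with hQdef
  have hDg : d⁄dX ℝ (PowerSeries.C (R := ℝ) y * L) =
      PowerSeries.C (R := ℝ) y * (pscomp (d⁄dX ℝ logSeries) u * d⁄dX ℝ u) := by
    rw [Derivation.leibniz, PowerSeries.derivative_C, smul_zero, add_zero, smul_eq_mul,
      hLdef, derivative_pscomp logSeries hu]
  have hP : (1 + u) * d⁄dX ℝ P = (PowerSeries.C (R := ℝ) y * d⁄dX ℝ u) * P := by
    rw [hPdef, derivative_pscomp _ hg, derivative_exp, hDg]
    calc (1 + u) * (pscomp (PowerSeries.exp ℝ) (PowerSeries.C (R := ℝ) y * L) *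
          (PowerSeries.C (R := ℝ) y * (pscomp (d⁄dX ℝ logSeries) u * d⁄dX ℝ u)))
        = (PowerSeries.C (R := ℝ) y * d⁄dX ℝ u * pscomp (PowerSeries.exp ℝ) (PowerSeries.C (R := ℝ) y * L)) *
            ((1 + u) * pscomp (d⁄dX ℝ logSeries) u) := by ring
      _ = _ := by rw [inv_rel hu]; ring
  have hQ : (1 + u) * d⁄dX ℝ Q = (PowerSeries.C (R := ℝ) y * d⁄dX ℝ u) * Q := by
    rw [hQdef, derivative_pscomp _ hu]
    calc (1 + u) * (pscomp (d⁄dX ℝ (binom y)) u * d⁄dX ℝ u)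
        = (pscomp (1 + PowerSeries.X) u * pscomp (d⁄dX ℝ (binom y)) u) * d⁄dX ℝ u := by
          rw [← one_add_eq_pscomp hu]; ring
      _ = pscomp ((1 + PowerSeries.X) * d⁄dX ℝ (binom y)) u * d⁄dX ℝ u := by
          rw [pscomp_mul _ _ hu]
      _ = pscomp (PowerSeries.C (R := ℝ) y * binom y) u * d⁄dX ℝ u := by
          rw [one_add_X_mul_derivative_binom]
      _ = (PowerSeries.C (R := ℝ) y * d⁄dX ℝ u) * pscomp (binom y) u := by
          rw [pscomp_C_mul]; ring
  have hΔ : P - Q = 0 := by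
    apply ode_unique hu (A := PowerSeries.C (R := ℝ) y * d⁄dX ℝ u)
    · rw [map_sub, mul_sub, hP, hQ, mul_sub]
    · rw [map_sub, hPdef, hQdef, constantCoeff_pscomp, constantCoeff_pscomp,
        PowerSeries.constantCoeff_exp, constantCoeff_binom, sub_self]
  exact sub_eq_zero.1 hΔ

/-- Lemma C : `log (exp w) = w`. -/
lemma lemmaC {w : PowerSeries ℝ} (hw : PowerSeries.constantCoeff (R := ℝ) w = 0) :
    pscomp logSeries (pscomp (PowerSeries.exp ℝ) w - 1) = w := by
  set E := pscomp (PowerSeries.exp ℝ) w with hEdef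
  have hE1 : PowerSeries.constantCoeff (R := ℝ) E = 1 := by
    rw [hEdef, constantCoeff_pscomp, PowerSeries.constantCoeff_exp]
  have hv : PowerSeries.constantCoeff (R := ℝ) (E - 1) = 0 := by
    rw [map_sub, hE1, map_one, sub_self]
  have hDv : d⁄dX ℝ (E - 1) = E * d⁄dX ℝ w := by
    rw [map_sub, Derivation.map_one_eq_zero, sub_zero, hEdef, derivative_pscomp _ hw, derivative_exp]
  apply PowerSeries.derivative.ext
  · rw [derivative_pscomp _ hv, hDv]
    have h1 : (1 + (E - 1)) * pscomp (d⁄dX ℝ logSeries) (E - 1) = 1 := inv_rel hv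
    rw [show (1 : PowerSeries ℝ) + (E - 1) = E by ring] at h1
    calc pscomp (d⁄dX ℝ logSeries) (E - 1) * (E * d⁄dX ℝ w)
        = (E * pscomp (d⁄dX ℝ logSeries) (E - 1)) * d⁄dX ℝ w := by ring
      _ = d⁄dX ℝ w := by rw [h1, one_mul]
  · rw [constantCoeff_pscomp, constantCoeff_logSeries, hw]

def dbinom (lam x : ℝ) : PowerSeries ℝ :=
  PowerSeries.mk fun k => drf lam x k / (k.factorial : ℝ)

lemma ffall_mul_pow {mu : ℝ} (hmu : mu ≠ 0) (x : ℝ) (k : ℕ) :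
    ffall (x / mu) k * mu ^ k = dff mu x k := by
  induction k with
  | zero => simp [ffall, dff]
  | succ m ih =>
    rw [ffall, dff, Finset.prod_range_succ, Finset.prod_range_succ, ← ffall, ← dff, ← ih,
      pow_succ]
    field_simp

/-- Lemma B : the degenerate binomial series identity. -/
lemma lemmaB {lam : ℝ} (hlam : lam ≠ 0) (x : ℝ) {u : PowerSeries ℝ}
    (hu : PowerSeries.constantCoeff (R := ℝ) u = 0) :
    pscomp (dbinom lam x) (pscomp (degLogSeries (-lam)) u) =
      pscomp (PowerSeries.exp ℝ) (PowerSeries.C (R := ℝ) x * pscomp logSeries u) := by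
  set mu := -lam with hmudef
  have hmu : mu ≠ 0 := by simpa [hmudef] using hlam
  set L := pscomp logSeries u with hLdef
  set G := pscomp (degLogSeries mu) u with hGdef
  set Pmu := pscomp (PowerSeries.exp ℝ) (PowerSeries.C (R := ℝ) mu * L) with hPmudef
  have hPmu_binom : Pmu = pscomp (binom mu) u := lemmaA mu hu
  have hPmu1 : PowerSeries.constantCoeff (R := ℝ) Pmu = 1 := by
    rw [hPmu_binom, constantCoeff_pscomp, constantCoeff_binom]
  have hv : PowerSeries.constantCoeff (R := ℝ) (Pmu - 1) = 0 := by
    rw [map_sub, hPmu1, map_one, sub_self]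
  have hG0 : PowerSeries.constantCoeff (R := ℝ) G = 0 := by
    rw [hGdef, constantCoeff_pscomp, constantCoeff_degLogSeries]
  -- step 2 : C mu * G = Pmu - 1
  have step2 : PowerSeries.C (R := ℝ) mu * G = Pmu - 1 := by
    rw [hGdef, degLogSeries_eq hmu, pscomp_C_mul, pscomp_sub, pscomp_one, ← hPmu_binom,
      ← mul_assoc, ← map_mul, mul_one_div_cancel hmu, map_one, one_mul]
  -- step 3 : pscomp (dbinom lam x) G = pscomp (binom (x/mu)) (C mu * G)
  have step3 : pscomp (dbinom lam x) G =
      pscomp (binom (x / mu)) (PowerSeries.C (R := ℝ) mu * G) := by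
    ext n
    rw [coeff_pscomp, coeff_pscomp]
    apply Finset.sum_congr rfl
    intro k _
    have hpow : (PowerSeries.C (R := ℝ) mu * G) ^ k = PowerSeries.C (R := ℝ) (mu ^ k) * G ^ k := by
      rw [mul_pow, ← map_pow]
    rw [hpow, PowerSeries.coeff_C_mul]
    have hcoeff : PowerSeries.coeff (R := ℝ) k (dbinom lam x) = drf lam x k / (k.factorial : ℝ) := by
      simp [dbinom]
    have hcoeff2 : PowerSeries.coeff (R := ℝ) k (binom (x / mu)) =
        ffall (x / mu) k / (k.factorial : ℝ) := by simp [binom]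
    rw [hcoeff, hcoeff2]
    have hd : drf lam x k = dff mu x k := by
      rw [drf, dff]
      apply Finset.prod_congr rfl
      intro i _
      rw [hmudef]
      ring
    rw [hd, ← ffall_mul_pow hmu x k]
    ring
  -- step 5 : logSeries ∘ (Pmu - 1) = C mu * L
  have step5 : pscomp logSeries (Pmu - 1) = PowerSeries.C (R := ℝ) mu * L := by
    have hw : PowerSeries.constantCoeff (R := ℝ) (PowerSeries.C (R := ℝ) mu * L) = 0 := by
      rw [map_mul, hLdef, constantCoeff_pscomp, constantCoeff_logSeries, mul_zero]
    rw [hPmudef]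
    exact lemmaC hw
  -- step 4 : apply lemma A with u := Pmu - 1
  have step4 : pscomp (binom (x / mu)) (Pmu - 1) =
      pscomp (PowerSeries.exp ℝ) (PowerSeries.C (R := ℝ) (x / mu) * pscomp logSeries (Pmu - 1)) :=
    (lemmaA (x / mu) hv).symm
  rw [step3, step2, step4, step5, ← mul_assoc, ← map_mul, div_mul_cancel₀ x hmu]

/-- triangle swap with Icc. -/
lemma triangle_swap (n : ℕ) (f : ℕ → ℕ → ℝ) :
    ∑ m ∈ Finset.range (n + 1), ∑ k ∈ Finset.range (m + 1), f m k =
      ∑ k ∈ Finset.range (n + 1), ∑ m ∈ Finset.Icc k n, f m k := by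
  have step1 : ∀ m ∈ Finset.range (n+1),
      ∑ k ∈ Finset.range (m + 1), f m k =
        ∑ k ∈ Finset.range (n + 1), if k ≤ m then f m k else 0 := by
    intro m hm
    have hmn : m ≤ n := by simpa [Nat.lt_succ_iff] using hm
    rw [Finset.sum_ite, Finset.sum_const_zero, add_zero]
    apply Finset.sum_congr
    · ext k
      simp only [Finset.mem_filter, Finset.mem_range]
      omega
    · intros; rfl
  rw [Finset.sum_congr rfl step1, Finset.sum_comm]
  apply Finset.sum_congr rfl
  intro k _
  rw [Finset.sum_ite, Finset.sum_const_zero, add_zero]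
  apply Finset.sum_congr
  · ext m
    simp only [Finset.mem_filter, Finset.mem_range, Finset.mem_Icc]
    omega
  · intros; rfl

end Aux

open Aux PowerSeries in
theorem probEuler_convolution_eq_sum_S1Y_eq_sum_degStirling1_braceY {Ω : Type*} [MeasurableSpace Ω] (μ : MeasureTheory.Measure Ω)
    [MeasureTheory.IsProbabilityMeasure μ] (Y : Ω → ℝ) (hY : Measurable Y)
    (hmom : ∀ n : ℕ, MeasureTheory.Integrable (fun ω => |Y ω| ^ n) μ)
    (lam : ℝ) (hlam : lam ≠ 0)
    (S1deg : ℕ → ℕ → ℝ)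
    (hS1deg : ∀ (x : ℝ) (n : ℕ),
      ffall x n = ∑ k ∈ Finset.range (n + 1), S1deg n k * dff lam x k)
    (x : ℝ) (n : ℕ) :
    (1 / 2 : ℝ) *
          ((∑ l ∈ Finset.range (n + 1),
              (n.choose l : ℝ) * probEuler lam μ Y l x * (∫ ω, dff lam (Y ω) (n - l) ∂μ)) +
            probEuler lam μ Y n x) =
        ∑ k ∈ Finset.range (n + 1), drf lam x k * (-1 : ℝ) ^ (n - k) * S1Y lam μ Y n k ∧
      (1 / 2 : ℝ) *
          ((∑ l ∈ Finset.range (n + 1),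
              (n.choose l : ℝ) * probEuler lam μ Y l x * (∫ ω, dff lam (Y ω) (n - l) ∂μ)) +
            probEuler lam μ Y n x) =
        ∑ k ∈ Finset.range (n + 1), dff lam x k *
          ∑ m ∈ Finset.Icc k n, S1deg m k * braceY lam μ Y n m := by
  set F := momSeries lam μ Y with hFdef
  have hcF : PowerSeries.constantCoeff (R := ℝ) F = 1 := by
    rw [← PowerSeries.coeff_zero_eq_constantCoeff_apply, hFdef, momSeries, PowerSeries.coeff_mk]
    simp [dff]
  have hu : PowerSeries.constantCoeff (R := ℝ) (F - 1) = 0 := by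
    rw [map_sub, hcF, map_one, sub_self]
  set E := PowerSeries.C (R := ℝ) 2 * (F + 1)⁻¹ * psPow F x with hEdef
  have hint : ∀ m : ℕ, (∫ ω, dff lam (Y ω) m ∂μ) =
      (m.factorial : ℝ) * PowerSeries.coeff (R := ℝ) m F := by
    intro m
    rw [hFdef, momSeries, PowerSeries.coeff_mk]
    field_simp
  have hEul : ∀ (l : ℕ) , probEuler lam μ Y l x =
      (l.factorial : ℝ) * PowerSeries.coeff (R := ℝ) l E := by
    intro l; rfl
  -- step 1 : LHS equals n! * coeff n (psPow F x)
  have hsum : (∑ l ∈ Finset.range (n + 1),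
      (n.choose l : ℝ) * probEuler lam μ Y l x * (∫ ω, dff lam (Y ω) (n - l) ∂μ)) =
      (n.factorial : ℝ) * PowerSeries.coeff (R := ℝ) n (E * F) := by
    rw [PowerSeries.coeff_mul, Finset.Nat.sum_antidiagonal_eq_sum_range_succ_mk, Finset.mul_sum]
    apply Finset.sum_congr rfl
    intro l hl
    have hl' : l ≤ n := by simpa [Nat.lt_succ_iff] using hl
    rw [hEul, hint (n - l)]
    have hfac : ((n.choose l : ℕ) : ℝ) * (l.factorial : ℝ) * ((n - l).factorial : ℝ)
        = (n.factorial : ℝ) := by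
      exact_mod_cast congrArg (Nat.cast : ℕ → ℝ) (Nat.choose_mul_factorial_mul_factorial hl')
    linear_combination (PowerSeries.coeff (R := ℝ) l E * PowerSeries.coeff (R := ℝ) (n - l) F) * hfac
  have hinv : (F + 1)⁻¹ * (F + 1) = 1 := by
    apply PowerSeries.inv_mul_cancel
    rw [map_add, hcF, map_one]
    norm_num
  have hEF : E * F + E = PowerSeries.C (R := ℝ) 2 * psPow F x := by
    calc E * F + E = (PowerSeries.C (R := ℝ) 2 * psPow F x) * ((F + 1)⁻¹ * (F + 1)) := by
          rw [hEdef]; ring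
      _ = PowerSeries.C (R := ℝ) 2 * psPow F x := by rw [hinv, mul_one]
  have hLHS : (1 / 2 : ℝ) *
      ((∑ l ∈ Finset.range (n + 1),
          (n.choose l : ℝ) * probEuler lam μ Y l x * (∫ ω, dff lam (Y ω) (n - l) ∂μ)) +
        probEuler lam μ Y n x) =
      (n.factorial : ℝ) * PowerSeries.coeff (R := ℝ) n (psPow F x) := by
    rw [hsum, hEul n]
    have h2 : PowerSeries.coeff (R := ℝ) n (E * F) + PowerSeries.coeff (R := ℝ) n E =
        2 * PowerSeries.coeff (R := ℝ) n (psPow F x) := by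
      rw [← map_add, hEF, ← PowerSeries.coeff_C_mul]
    linear_combination ((n.factorial : ℝ) / 2) * h2
  constructor
  · -- first identity
    rw [hLHS]
    have hB := lemmaB hlam x hu
    have hG : cumSeries lam μ Y = pscomp (degLogSeries (-lam)) (F - 1) := rfl
    have hps : psPow F x = pscomp (PowerSeries.exp ℝ)
        (PowerSeries.C (R := ℝ) x * pscomp logSeries (F - 1)) := rfl
    rw [hps, ← hB, coeff_pscomp, Finset.mul_sum]
    apply Finset.sum_congr rfl
    intro k _
    have hS : S1Y lam μ Y n k = (-1 : ℝ) ^ (n - k) *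
        ((n.factorial : ℝ) * PowerSeries.coeff (R := ℝ) n ((cumSeries lam μ Y) ^ k) /
          (k.factorial : ℝ)) := rfl
    rw [hS, hG]
    have hone : ((-1 : ℝ)) ^ (n - k) * ((-1 : ℝ)) ^ (n - k) = 1 := by
      rw [← mul_pow]; norm_num
    have hco : PowerSeries.coeff (R := ℝ) k (dbinom lam x) = drf lam x k / (k.factorial : ℝ) := by
      simp [dbinom]
    rw [hco]
    linear_combination (-(drf lam x k * ((n.factorial : ℝ) *
      PowerSeries.coeff (R := ℝ) n ((pscomp (degLogSeries (-lam)) (F - 1)) ^ k) /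
      (k.factorial : ℝ)))) * hone

  · -- second identity
    rw [hLHS]
    have hA := lemmaA x hu
    have hps : psPow F x = pscomp (PowerSeries.exp ℝ)
        (PowerSeries.C (R := ℝ) x * pscomp logSeries (F - 1)) := rfl
    rw [hps, hA, coeff_pscomp, Finset.mul_sum]
    have hbrace : ∀ m k' : ℕ, braceY lam μ Y m k' =
        (m.factorial : ℝ) * PowerSeries.coeff (R := ℝ) m ((F - 1) ^ k') / (k'.factorial : ℝ) := by
      intros; rfl
    have step : ∀ m ∈ Finset.range (n+1),
        (n.factorial : ℝ) * (PowerSeries.coeff (R := ℝ) m (binom x) *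
          PowerSeries.coeff (R := ℝ) n ((F - 1) ^ m)) =
        ∑ k ∈ Finset.range (m + 1), S1deg m k * dff lam x k * braceY lam μ Y n m := by
      intro m _
      have hco : PowerSeries.coeff (R := ℝ) m (binom x) = ffall x m / (m.factorial : ℝ) := by
        simp [binom]
      rw [hco, hbrace n m, ← Finset.sum_mul, ← hS1deg x m]
      have hmf : ((m.factorial : ℕ) : ℝ) ≠ 0 := Nat.cast_ne_zero.2 (Nat.factorial_ne_zero _)
      field_simp
    rw [Finset.sum_congr rfl step, triangle_swap n
      (fun m k => S1deg m k * dff lam x k * braceY lam μ Y n m)]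
    apply Finset.sum_congr rfl
    intro k _
    rw [Finset.mul_sum]
    apply Finset.sum_congr rfl
    intro m _
    ring


end
end

section
/- Fix a nonzero real number λ and let Y be a standard normal random variable. Then for all integers n≥k≥0, {n brace k}_{Y,λ} = (1/k!) Σ_{l=0}^{k} C(k,l) (−1)^{k−l} Σ_{j=0}^{⌊n/2⌋} (l^j (2j)!/(2^j j!)) Σ_{m=2j}^{n} S_1(m,2j) {n brace m}_λ, where C(k,l) is the binomial coefficient. -/
open MeasureTheory Finset

noncomputable section

namespace DegStirAux
open MeasureTheory Finset Real ProbabilityTheory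
open scoped NNReal ENNReal

lemma dff_succ (lam x : ℝ) (n : ℕ) : dff lam x (n + 1) = dff lam x n * (x - n * lam) := by
  rw [dff, prod_range_succ]; rfl

lemma dff_continuous (lam : ℝ) (n : ℕ) : Continuous fun x => dff lam x n := by
  unfold dff
  exact continuous_finset_prod _ fun i _ => continuous_id.sub continuous_const

lemma dff_zero_left (lam : ℝ) (n : ℕ) : dff lam 0 n = if n = 0 then 1 else 0 := by
  cases n with
  | zero => simp [dff]
  | succ n => rw [if_neg n.succ_ne_zero, dff]
              exact prod_eq_zero (mem_range.2 n.succ_pos) (by simp)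

lemma dff_add (lam : ℝ) (n : ℕ) (x y : ℝ) :
    dff lam (x + y) n
      = ∑ p ∈ range (n + 1), (n.choose p : ℝ) * (dff lam x p * dff lam y (n - p)) := by
  induction n with
  | zero => simp [dff]
  | succ n ih =>
    set g : ℕ → ℝ := fun p => dff lam x p * dff lam y (n + 1 - p) with hg
    have hA : dff lam (x + y) (n + 1)
        = ∑ p ∈ range (n + 1), (n.choose p : ℝ) * (g (p + 1) + g p) := by
      rw [dff_succ, ih, sum_mul]
      refine sum_congr rfl fun p hp => ?_
      have hpn : p ≤ n := by simpa [Nat.lt_succ_iff] using hp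
      have h1 : x + y - n * lam = (x - p * lam) + (y - (n - p : ℕ) * lam) := by
        have : ((n - p : ℕ) : ℝ) = (n : ℝ) - p := by
          push_cast [Nat.cast_sub hpn]; try ring
        rw [this]; try ring
      have h2 : g (p + 1) = dff lam x p * (x - p * lam) * dff lam y (n - p) := by
        simp only [hg]
        have : n + 1 - (p + 1) = n - p := by omega
        rw [this, dff_succ]; try ring
      have h3 : g p = dff lam x p * (dff lam y (n - p) * (y - (n - p : ℕ) * lam)) := by
        simp only [hg]
        have : n + 1 - p = (n - p) + 1 := by omega
        rw [this, dff_succ]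
      rw [h1, h2, h3]; ring
    rw [hA]
    have hB : ∑ p ∈ range (n + 2), ((n+1).choose p : ℝ) * g p
        = ∑ p ∈ range (n + 1), ((n.choose p : ℝ) * g (p+1) + (n.choose (p+1) : ℝ) * g (p+1))
          + g 0 := by
      rw [sum_range_succ']
      simp [Nat.choose_succ_succ, add_mul]
    have hC : ∑ p ∈ range (n + 1), (n.choose (p+1) : ℝ) * g (p+1) + g 0
        = ∑ p ∈ range (n + 1), (n.choose p : ℝ) * g p := by
      have e1 := sum_range_succ' (fun p => (n.choose p : ℝ) * g p) (n + 1)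
      have e2 := sum_range_succ (fun p => (n.choose p : ℝ) * g p) (n + 1)
      rw [e2] at e1
      simpa using e1.symm
    have goal : ∑ p ∈ range (n + 2), ((n+1).choose p : ℝ) * g p
        = ∑ p ∈ range (n + 1), (n.choose p : ℝ) * (g (p + 1) + g p) := by
      rw [hB, sum_add_distrib, add_assoc, hC]
      simp [mul_add, sum_add_distrib]
    rw [← goal]

def cc (j : ℕ) : ℝ := ((2 * j).factorial : ℝ) / (2 ^ j * (j.factorial : ℝ))

def MM (i : ℕ) (t : ℝ) : ℝ := if Even i then t ^ (i / 2) * cc (i / 2) else 0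

lemma cc_zero : cc 0 = 1 := by norm_num [cc]

lemma MM_two_mul (j : ℕ) (t : ℝ) : MM (2 * j) t = t ^ j * cc j := by
  simp [MM, Nat.mul_div_cancel_left j (by norm_num : 0 < 2)]

lemma MM_odd {i : ℕ} (h : ¬ Even i) (t : ℝ) : MM i t = 0 := by simp [MM, h]

lemma sum_even_range (N : ℕ) (f : ℕ → ℝ) (hf : ∀ q, ¬ Even q → f q = 0) :
    ∑ q ∈ range (N + 1), f q = ∑ r ∈ range (N / 2 + 1), f (2 * r) := by
  rw [← Finset.sum_filter_add_sum_filter_not (range (N + 1)) (fun q => Even q)]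
  have h2 : (∑ q ∈ (range (N + 1)).filter (fun q => ¬ Even q), f q) = 0 :=
    sum_eq_zero fun q hq => hf q (mem_filter.mp hq).2
  rw [h2, add_zero]
  refine sum_nbij' (fun q => q / 2) (fun r => 2 * r) ?_ ?_ ?_ ?_ ?_
  · intro q hq
    simp only [mem_filter, mem_range, Nat.even_iff] at hq
    simp only [mem_range]
    omega
  · intro r hr
    simp only [mem_range] at hr
    simp only [mem_filter, mem_range, Nat.even_iff]
    omega
  · intro q hq
    simp only [mem_filter, mem_range, Nat.even_iff] at hq
    omega
  · intro r _
    omega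
  · intro q hq
    simp only [mem_filter, mem_range, Nat.even_iff] at hq
    congr 1
    omega

lemma cc_mul {j r : ℕ} (h : r ≤ j) :
    ((2 * j).choose (2 * r) : ℝ) * cc r * cc (j - r) = (j.choose r : ℝ) * cc j := by
  have h2 : 2 * r ≤ 2 * j := by omega
  rw [Nat.cast_choose ℝ h2, Nat.cast_choose ℝ h]
  have e1 : 2 * j - 2 * r = 2 * (j - r) := by omega
  rw [e1]
  have e2 : (2 : ℝ) ^ j = 2 ^ r * 2 ^ (j - r) := by
    rw [← pow_add]; congr 1; omega
  simp only [cc]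
  rw [e2]
  have f1 : ((2 * j).factorial : ℝ) ≠ 0 := Nat.cast_ne_zero.2 (Nat.factorial_ne_zero _)
  have f2 : ((2 * r).factorial : ℝ) ≠ 0 := Nat.cast_ne_zero.2 (Nat.factorial_ne_zero _)
  have f3 : ((2 * (j - r)).factorial : ℝ) ≠ 0 := Nat.cast_ne_zero.2 (Nat.factorial_ne_zero _)
  have f4 : (j.factorial : ℝ) ≠ 0 := Nat.cast_ne_zero.2 (Nat.factorial_ne_zero _)
  have f5 : (r.factorial : ℝ) ≠ 0 := Nat.cast_ne_zero.2 (Nat.factorial_ne_zero _)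
  have f6 : ((j - r).factorial : ℝ) ≠ 0 := Nat.cast_ne_zero.2 (Nat.factorial_ne_zero _)
  field_simp

lemma cc_succ (j : ℕ) : cc (j + 1) = (2 * j + 1) * cc j := by
  have e : 2 * (j + 1) = (2 * j + 1) + 1 := by omega
  simp only [cc, e, Nat.factorial_succ]
  have f4 : (j.factorial : ℝ) ≠ 0 := Nat.cast_ne_zero.2 (Nat.factorial_ne_zero _)
  have f1 : ((2 * j).factorial : ℝ) ≠ 0 := Nat.cast_ne_zero.2 (Nat.factorial_ne_zero _)
  have h2 : (2 : ℝ) ^ (j + 1) ≠ 0 := by positivity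
  push_cast
  field_simp
  ring

lemma MMconv (i : ℕ) (t : ℝ) :
    ∑ q ∈ range (i + 1), (i.choose q : ℝ) * MM q t * MM (i - q) 1 = MM i (t + 1) := by
  by_cases hi : Even i
  · obtain ⟨j, hj⟩ := hi
    have hij : i = 2 * j := by omega
    subst hij
    rw [sum_even_range (2 * j) _ (fun q hq => by rw [MM_odd hq]; ring)]
    have hj2 : 2 * j / 2 = j := by omega
    rw [hj2]
    have heach : ∀ r ∈ range (j + 1),
        ((2 * j).choose (2 * r) : ℝ) * MM (2 * r) t * MM (2 * j - 2 * r) 1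
          = (j.choose r : ℝ) * cc j * t ^ r := by
      intro r hr
      have hrj : r ≤ j := by simpa [Nat.lt_succ_iff] using hr
      have e : 2 * j - 2 * r = 2 * (j - r) := by omega
      rw [MM_two_mul, e, MM_two_mul, one_pow, one_mul]
      have := cc_mul hrj
      calc ((2 * j).choose (2 * r) : ℝ) * (t ^ r * cc r) * cc (j - r)
          = (((2 * j).choose (2 * r) : ℝ) * cc r * cc (j - r)) * t ^ r := by ring
        _ = (j.choose r : ℝ) * cc j * t ^ r := by rw [this]
    rw [sum_congr rfl heach]
    have hap := add_pow t 1 j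
    simp only [one_pow, mul_one] at hap
    rw [MM_two_mul, hap, sum_mul]
    exact sum_congr rfl fun x _ => by ring
  · rw [MM_odd hi]
    refine sum_eq_zero fun q hq => ?_
    simp only [mem_range, Nat.lt_succ_iff] at hq
    by_cases hq2 : Even q
    · have : ¬ Even (i - q) := by
        rw [Nat.even_iff] at *
        omega
      rw [MM_odd this]; ring
    · rw [MM_odd hq2]; ring

lemma MM_sq (c : ℝ) (i : ℕ) : c ^ i * MM i 1 = MM i (c ^ 2) := by
  by_cases h : Even i
  · obtain ⟨j, hj⟩ := h
    have hij : i = 2 * j := by omega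
    subst hij
    rw [MM_two_mul, MM_two_mul, one_pow, one_mul, pow_mul]
  · rw [MM_odd h, MM_odd h, mul_zero]

lemma MM_zero_right (i : ℕ) : MM i 0 = if i = 0 then 1 else 0 := by
  rcases Nat.eq_zero_or_pos i with h | h
  · subst h; simp [MM, cc_zero]
  · rw [if_neg (by omega)]
    by_cases he : Even i
    · have h2 : i / 2 ≠ 0 := by rw [Nat.even_iff] at he; omega
      rw [MM, if_pos he, zero_pow h2, zero_mul]
    · exact MM_odd he 0

lemma MM_add_two (i : ℕ) : MM (i + 2) 1 = ((i : ℝ) + 1) * MM i 1 := by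
  by_cases h : Even i
  · obtain ⟨j, hj⟩ := h
    have hij : i = 2 * j := by omega
    subst hij
    have e : 2 * j + 2 = 2 * (j + 1) := by omega
    rw [e, MM_two_mul, MM_two_mul, one_pow, one_pow, one_mul, one_mul, cc_succ]
    push_cast
    ring
  · rw [MM_odd h, MM_odd (by rw [Nat.even_iff] at *; omega), mul_zero]

lemma intJ (i : ℕ) : Integrable fun x : ℝ => x ^ i * rexp (-x ^ 2 / 2) := by
  have h := integrable_rpow_mul_exp_neg_mul_sq (b := (1/2 : ℝ)) (by norm_num)
    (s := (i : ℝ)) (lt_of_lt_of_le (by norm_num) (Nat.cast_nonneg i))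
  have e : ∀ x : ℝ, -(1/2 : ℝ) * x ^ 2 = -x ^ 2 / 2 := fun x => by ring
  simp only [Real.rpow_natCast, e] at h
  exact h

lemma J0 : (∫ x : ℝ, rexp (-x ^ 2 / 2)) = Real.sqrt (2 * π) := by
  have h := integral_gaussian (1/2 : ℝ)
  have e : ∀ x : ℝ, -(1/2 : ℝ) * x ^ 2 = -x ^ 2 / 2 := fun x => by ring
  simp only [e] at h
  rw [h]
  rw [show π / (1/2 : ℝ) = 2 * π by ring]

lemma J1 : (∫ x : ℝ, x ^ 1 * rexp (-x ^ 2 / 2)) = 0 := by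
  have hd : ∀ x : ℝ, HasDerivAt (fun x : ℝ => -rexp (-x ^ 2 / 2))
      (x ^ 1 * rexp (-x ^ 2 / 2)) x := by
    intro x
    have h1 : HasDerivAt (fun x : ℝ => -x ^ 2 / 2) (-x) x := by
      have := ((hasDerivAt_pow 2 x).neg).div_const 2
      simpa using this.congr_deriv (by ring)
    have h2 := (h1.exp).neg
    exact h2.congr_deriv (by ring)
  have hf : Integrable (fun x : ℝ => -rexp (-x ^ 2 / 2)) := by
    have h := integrable_exp_neg_mul_sq (by norm_num : (0:ℝ) < 1/2)
    have e : ∀ x : ℝ, -(1/2 : ℝ) * x ^ 2 = -x ^ 2 / 2 := fun x => by ring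
    simp only [e] at h
    exact h.neg
  exact integral_eq_zero_of_hasDerivAt_of_integrable hd (intJ 1) hf

lemma Jrec (i : ℕ) : (∫ x : ℝ, x ^ (i + 2) * rexp (-x ^ 2 / 2))
    = (i + 1 : ℝ) * ∫ x : ℝ, x ^ i * rexp (-x ^ 2 / 2) := by
  have hd : ∀ x : ℝ, HasDerivAt (fun x : ℝ => -(x ^ (i + 1) * rexp (-x ^ 2 / 2)))
      (x ^ (i + 2) * rexp (-x ^ 2 / 2) - (i + 1 : ℝ) * (x ^ i * rexp (-x ^ 2 / 2))) x := by
    intro x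
    have h1 : HasDerivAt (fun x : ℝ => -x ^ 2 / 2) (-x) x := by
      have := ((hasDerivAt_pow 2 x).neg).div_const 2
      simpa using this.congr_deriv (by ring)
    have h2 : HasDerivAt (fun x : ℝ => x ^ (i + 1)) ((i + 1 : ℝ) * x ^ i) x := by
      simpa using hasDerivAt_pow (i + 1) x
    have h3 := (h2.mul h1.exp).neg
    refine h3.congr_deriv ?_
    rw [pow_succ _ (i + 1)]
    ring
  have h0 := integral_eq_zero_of_hasDerivAt_of_integrable hd
    ((intJ (i + 2)).sub ((intJ i).const_mul _)) ((intJ (i + 1)).neg)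
  rw [integral_sub (intJ (i + 2)) ((intJ i).const_mul _), integral_const_mul] at h0
  linarith

lemma gauss_integral (g : ℝ → ℝ) :
    ∫ x, g x ∂(gaussianReal 0 1)
      = ∫ x, gaussianPDFReal 0 1 x * g x := by
  rw [gaussianReal_of_var_ne_zero 0 one_ne_zero]
  have hpdf : gaussianPDF 0 1 = fun x => ((Real.toNNReal (gaussianPDFReal 0 1 x) : ℝ≥0) : ℝ≥0∞) := rfl
  rw [hpdf, integral_withDensity_eq_integral_smul
    ((measurable_gaussianPDFReal 0 1).real_toNNReal) g]
  refine integral_congr_ae (Filter.Eventually.of_forall fun x => ?_)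
  show (gaussianPDFReal 0 1 x).toNNReal • g x = gaussianPDFReal 0 1 x * g x
  rw [NNReal.smul_def, smul_eq_mul, Real.coe_toNNReal _ (gaussianPDFReal_nonneg 0 1 x)]

lemma pdf_eq (x : ℝ) : gaussianPDFReal 0 1 x = (Real.sqrt (2 * π))⁻¹ * rexp (-x ^ 2 / 2) := by
  simp [gaussianPDFReal]

lemma gauss_int_pow (i : ℕ) : Integrable (fun x : ℝ => x ^ i) (gaussianReal 0 1) := by
  rw [gaussianReal_of_var_ne_zero 0 one_ne_zero]
  rw [integrable_withDensity_iff (measurable_gaussianPDF 0 1)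
    (Filter.Eventually.of_forall fun x => ENNReal.ofReal_lt_top)]
  have he : (fun x : ℝ => x ^ i * (gaussianPDF 0 1 x).toReal)
      = fun x : ℝ => (Real.sqrt (2 * π))⁻¹ * (x ^ i * rexp (-x ^ 2 / 2)) := by
    funext x
    rw [gaussianPDF, ENNReal.toReal_ofReal (gaussianPDFReal_nonneg 0 1 x), pdf_eq]
    ring
  rw [he]
  exact (intJ i).const_mul _

lemma gauss_mom (i : ℕ) :
    (∫ x, x ^ i ∂(gaussianReal 0 1))
      = (Real.sqrt (2 * π))⁻¹ * ∫ x : ℝ, x ^ i * rexp (-x ^ 2 / 2) := by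
  rw [gauss_integral, ← integral_const_mul]
  refine integral_congr_ae (Filter.Eventually.of_forall fun x => ?_)
  show gaussianPDFReal 0 1 x * x ^ i = (Real.sqrt (2 * π))⁻¹ * (x ^ i * rexp (-x ^ 2 / 2))
  rw [pdf_eq]; ring

lemma momMM (i : ℕ) : (∫ x, x ^ i ∂(gaussianReal 0 1)) = MM i 1 := by
  induction i using Nat.strong_induction_on with
  | _ i ih =>
    match i with
    | 0 =>
      rw [gauss_mom 0]
      have h : (∫ x : ℝ, x ^ 0 * rexp (-x ^ 2 / 2)) = Real.sqrt (2 * π) := by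
        rw [← J0]
        exact integral_congr_ae (Filter.Eventually.of_forall fun x => by simp)
      rw [h, MM, if_pos Even.zero]
      simp only [Nat.zero_div, pow_zero, cc_zero, one_mul, mul_one]
      exact inv_mul_cancel₀ (ne_of_gt (Real.sqrt_pos.2 (by positivity)))
    | 1 =>
      rw [gauss_mom 1, J1, mul_zero, MM_odd (by decide)]
    | (i+2) =>
      rw [gauss_mom (i+2), Jrec i]
      have h1 : (Real.sqrt (2*π))⁻¹ * ((i+1:ℝ) * ∫ x : ℝ, x ^ i * rexp (-x ^ 2 / 2))
          = (i+1:ℝ) * ((Real.sqrt (2*π))⁻¹ * ∫ x : ℝ, x ^ i * rexp (-x ^ 2 / 2)) := by ring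
      rw [h1, ← gauss_mom i, ih i (by omega), MM_add_two]


section Param

variable {lam : ℝ} {D : ℕ → ℕ → ℝ}

def bb (D : ℕ → ℕ → ℝ) (n : ℕ) (t : ℝ) : ℝ := ∑ i ∈ range (n + 1), D n i * MM i t

lemma dff_expand (hD : ∀ (x : ℝ) (n : ℕ), dff lam x n = ∑ i ∈ range (n + 1), D n i * x ^ i)
    (c : ℝ) (n : ℕ) :
    (fun x : ℝ => dff lam (c * x) n) = fun x => ∑ i ∈ range (n + 1), (D n i * c ^ i) * x ^ i := by
  funext x
  rw [hD (c * x) n]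
  exact sum_congr rfl fun i _ => by rw [mul_pow]; ring

lemma int_dff (hD : ∀ (x : ℝ) (n : ℕ), dff lam x n = ∑ i ∈ range (n + 1), D n i * x ^ i)
    (c : ℝ) (n : ℕ) :
    Integrable (fun x => dff lam (c * x) n) (gaussianReal 0 1) := by
  rw [dff_expand hD]
  exact integrable_finset_sum _ fun i _ => (gauss_int_pow i).const_mul _

lemma key2 (hD : ∀ (x : ℝ) (n : ℕ), dff lam x n = ∑ i ∈ range (n + 1), D n i * x ^ i)
    (c : ℝ) (n : ℕ) :
    ∫ x, dff lam (c * x) n ∂(gaussianReal 0 1) = bb D n (c ^ 2) := by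
  rw [dff_expand hD, integral_finset_sum _ fun i _ => (gauss_int_pow i).const_mul _]
  refine sum_congr rfl fun i _ => ?_
  rw [integral_const_mul, momMM i]
  rw [mul_assoc, MM_sq]

lemma key2' (hD : ∀ (x : ℝ) (n : ℕ), dff lam x n = ∑ i ∈ range (n + 1), D n i * x ^ i)
    (n : ℕ) :
    ∫ x, dff lam x n ∂(gaussianReal 0 1) = bb D n 1 := by
  have h := key2 hD 1 n
  simp only [one_mul, one_pow] at h
  exact h

lemma bb_zero (hD : ∀ (x : ℝ) (n : ℕ), dff lam x n = ∑ i ∈ range (n + 1), D n i * x ^ i)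
    (n : ℕ) : bb D n 0 = if n = 0 then 1 else 0 := by
  have hD0 : D n 0 = dff lam 0 n := by
    rw [hD 0 n, sum_eq_single 0]
    · simp
    · intro i _ hi; rw [zero_pow hi, mul_zero]
    · intro h; exact absurd (mem_range.2 n.succ_pos) h
  unfold bb
  rw [sum_eq_single 0]
  · rw [MM_zero_right, if_pos rfl, mul_one, hD0, dff_zero_left]
  · intro i _ hi; rw [MM_zero_right, if_neg hi, mul_zero]
  · intro h; exact absurd (mem_range.2 n.succ_pos) h

lemma int_dff_shift (hD : ∀ (x : ℝ) (n : ℕ), dff lam x n = ∑ i ∈ range (n + 1), D n i * x ^ i)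
    (w : ℝ) (n : ℕ) :
    ∫ z, dff lam (w + z) n ∂(gaussianReal 0 1)
      = ∑ i ∈ range (n + 1), D n i *
          ∑ q ∈ range (i + 1), (i.choose q : ℝ) * w ^ q * MM (i - q) 1 := by
  have hfun : (fun z : ℝ => dff lam (w + z) n)
      = fun z => ∑ i ∈ range (n + 1), ∑ q ∈ range (i + 1),
          (D n i * ((i.choose q : ℝ) * w ^ q)) * z ^ (i - q) := by
    funext z
    rw [hD (w + z) n]
    refine sum_congr rfl fun i _ => ?_
    rw [add_pow w z i, mul_sum]
    exact sum_congr rfl fun q _ => by ring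
  rw [hfun, integral_finset_sum _ fun i _ =>
    integrable_finset_sum _ fun q _ => (gauss_int_pow (i - q)).const_mul _]
  refine sum_congr rfl fun i _ => ?_
  rw [integral_finset_sum _ fun q _ => (gauss_int_pow (i - q)).const_mul _, mul_sum]
  refine sum_congr rfl fun q _ => ?_
  rw [integral_const_mul, momMM]
  ring

lemma key3 (hD : ∀ (x : ℝ) (n : ℕ), dff lam x n = ∑ i ∈ range (n + 1), D n i * x ^ i)
    (c : ℝ) (n : ℕ) :
    ∑ p ∈ range (n + 1), (n.choose p : ℝ) * bb D p (c ^ 2) * bb D (n - p) 1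
      = bb D n (c ^ 2 + 1) := by
  -- rewrite each `bb D p (c^2)` as an integral in y
  have e1 : ∀ p ∈ range (n + 1), (n.choose p : ℝ) * bb D p (c ^ 2) * bb D (n - p) 1
      = ∫ y, ((n.choose p : ℝ) * bb D (n - p) 1) * dff lam (c * y) p ∂(gaussianReal 0 1) := by
    intro p _
    rw [integral_const_mul, ← key2 hD c p]
    ring
  rw [sum_congr rfl e1, ← integral_finset_sum _ fun p _ =>
    ((int_dff hD c p).const_mul _)]
  -- pointwise in y, recognize the Vandermonde sum as ∫ z dff(c y + z, n)
  have e2 : ∀ y : ℝ, (∑ p ∈ range (n + 1),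
        ((n.choose p : ℝ) * bb D (n - p) 1) * dff lam (c * y) p)
      = ∑ i ∈ range (n + 1), D n i *
          ∑ q ∈ range (i + 1), (i.choose q : ℝ) * (c * y) ^ q * MM (i - q) 1 := by
    intro y
    rw [← int_dff_shift hD (c * y) n]
    have e3 : ∀ z : ℝ, dff lam ((c * y) + z) n
        = ∑ p ∈ range (n + 1), ((n.choose p : ℝ) * dff lam (c * y) p) * dff lam (1 * z) (n - p) := by
      intro z
      rw [dff_add]
      exact sum_congr rfl fun p _ => by rw [one_mul]; ring
    rw [integral_congr_ae (Filter.Eventually.of_forall e3),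
      integral_finset_sum _ fun p _ => (int_dff hD 1 (n - p)).const_mul _]
    refine sum_congr rfl fun p _ => ?_
    rw [integral_const_mul]
    have h4 := key2 hD 1 (n - p)
    rw [one_pow] at h4
    rw [h4]
    ring
  rw [integral_congr_ae (Filter.Eventually.of_forall e2)]
  have hfun : (fun y : ℝ => ∑ i ∈ range (n + 1), D n i *
        ∑ q ∈ range (i + 1), (i.choose q : ℝ) * (c * y) ^ q * MM (i - q) 1)
      = fun y => ∑ i ∈ range (n + 1), ∑ q ∈ range (i + 1),
          (D n i * ((i.choose q : ℝ) * MM (i - q) 1 * c ^ q)) * y ^ q := by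
    funext y
    refine sum_congr rfl fun i _ => ?_
    rw [mul_sum]
    refine sum_congr rfl fun q _ => ?_
    rw [mul_pow]
    ring
  rw [hfun, integral_finset_sum _ fun i _ =>
    integrable_finset_sum _ fun q _ => (gauss_int_pow q).const_mul _]
  unfold bb
  refine sum_congr rfl fun i _ => ?_
  rw [integral_finset_sum _ fun q _ => (gauss_int_pow q).const_mul _]
  rw [← MMconv i (c ^ 2), mul_sum]
  refine sum_congr rfl fun q _ => ?_
  rw [integral_const_mul, momMM, ← MM_sq c q]
  ring

end Param

end DegStirAux

theorem gaussian_braceY_eq_sum {Ω : Type*} [MeasurableSpace Ω] (μ : MeasureTheory.Measure Ω)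
    [MeasureTheory.IsProbabilityMeasure μ] (Y : Ω → ℝ) (hY : Measurable Y)
    (hYlaw : μ.map Y = ProbabilityTheory.gaussianReal 0 1)
    (lam : ℝ) (hlam : lam ≠ 0)
    (S1 : ℕ → ℕ → ℝ)
    (hS1 : ∀ (x : ℝ) (n : ℕ), ffall x n = ∑ k ∈ Finset.range (n + 1), S1 n k * x ^ k)
    (St2 : ℕ → ℕ → ℝ)
    (hSt2 : ∀ (x : ℝ) (n : ℕ),
      dff lam x n = ∑ k ∈ Finset.range (n + 1), St2 n k * ffall x k)
    (n k : ℕ) (hkn : k ≤ n) :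
    braceY lam μ Y n k =
      (1 / (k.factorial : ℝ)) * ∑ l ∈ Finset.range (k + 1),
        (k.choose l : ℝ) * (-1 : ℝ) ^ (k - l) *
          ∑ j ∈ Finset.range (n / 2 + 1),
            (l : ℝ) ^ j * ((2 * j).factorial : ℝ) / (2 ^ j * (j.factorial : ℝ)) *
              ∑ m ∈ Finset.Icc (2 * j) n, S1 m (2 * j) * St2 n m := by
  classical
  open DegStirAux in
  unfold braceY
  set D : ℕ → ℕ → ℝ := fun n i => ∑ m ∈ Finset.Icc i n, S1 m i * St2 n m with hDdef
  have hD : ∀ (x : ℝ) (n : ℕ), dff lam x n = ∑ i ∈ Finset.range (n + 1), D n i * x ^ i := by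
    intro x n
    rw [hSt2 x n]
    have h1 : ∀ m ∈ Finset.range (n + 1), St2 n m * ffall x m
        = ∑ kk ∈ Finset.range (m + 1), St2 n m * (S1 m kk * x ^ kk) := by
      intro m _
      rw [hS1 x m, mul_sum]
    rw [Finset.sum_congr rfl h1]
    rw [Finset.sum_comm' (s := Finset.range (n + 1)) (t := fun m => Finset.range (m + 1))
      (t' := Finset.range (n + 1)) (s' := fun kk => Finset.Icc kk n)
      (fun m kk => by simp only [Finset.mem_range, Finset.mem_Icc]; omega)]
    refine Finset.sum_congr rfl fun kk _ => ?_
    simp only [hDdef]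
    rw [Finset.sum_mul]
    exact Finset.sum_congr rfl fun m _ => by ring
  have hmap : ∀ n : ℕ, ∫ ω, dff lam (Y ω) n ∂μ = ∫ x, dff lam x n ∂(ProbabilityTheory.gaussianReal 0 1) := by
    intro n
    rw [← hYlaw,
      integral_map hY.aemeasurable ((DegStirAux.dff_continuous lam n).aestronglyMeasurable)]
  set F := momSeries lam μ Y with hF
  have hFcoeff : ∀ n : ℕ, (n.factorial : ℝ) * PowerSeries.coeff (R := ℝ) n F = DegStirAux.bb D n 1 := by
    intro n
    rw [hF, momSeries, PowerSeries.coeff_mk, hmap n]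
    have hne : (n.factorial : ℝ) ≠ 0 := Nat.cast_ne_zero.2 (Nat.factorial_ne_zero _)
    rw [mul_comm, div_mul_cancel₀ _ hne]
    have h2 := DegStirAux.key2 (lam := lam) hD 1 n
    rw [one_pow] at h2
    have h3 : ∫ x, dff lam (1 * x) n ∂(ProbabilityTheory.gaussianReal 0 1) = ∫ x, dff lam x n ∂(ProbabilityTheory.gaussianReal 0 1) :=
      integral_congr_ae (Filter.Eventually.of_forall fun x => by simp only [one_mul])
    rw [← h3]
    exact h2
  have hpow : ∀ (l nn : ℕ),
      (nn.factorial : ℝ) * PowerSeries.coeff (R := ℝ) nn (F ^ l) = DegStirAux.bb D nn (l : ℝ) := by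
    intro l
    induction l with
    | zero =>
      intro nn
      rw [pow_zero, PowerSeries.coeff_one, Nat.cast_zero, DegStirAux.bb_zero (lam := lam) hD]
      by_cases h : nn = 0
      · subst h; simp
      · simp [h]
    | succ l ih =>
      intro nn
      rw [pow_succ, PowerSeries.coeff_mul, Finset.Nat.sum_antidiagonal_eq_sum_range_succ_mk,
        mul_sum]
      have hterm : ∀ p ∈ Finset.range (nn + 1),
          (nn.factorial : ℝ) * (PowerSeries.coeff (R := ℝ) p (F ^ l) * PowerSeries.coeff (R := ℝ) (nn - p) F)
            = (nn.choose p : ℝ) * DegStirAux.bb D p (l : ℝ) * DegStirAux.bb D (nn - p) 1 := by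
        intro p hp
        have hpn : p ≤ nn := by simpa [Nat.lt_succ_iff] using hp
        have hfac : (nn.factorial : ℝ)
            = (nn.choose p : ℝ) * (p.factorial : ℝ) * ((nn - p).factorial : ℝ) := by
          exact_mod_cast (Nat.choose_mul_factorial_mul_factorial hpn).symm
        rw [hfac, ← ih p, ← hFcoeff (nn - p)]
        ring
      rw [Finset.sum_congr rfl hterm]
      have hc : Real.sqrt (l : ℝ) ^ 2 = (l : ℝ) := Real.sq_sqrt (Nat.cast_nonneg l)
      have h5 := DegStirAux.key3 (lam := lam) hD (Real.sqrt (l : ℝ)) nn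
      rw [hc] at h5
      rw [h5]
      norm_cast
  have hsub : ((F - 1 : PowerSeries ℝ)) ^ k
      = ∑ l ∈ Finset.range (k + 1),
          F ^ l * PowerSeries.C (R := ℝ) ((-1 : ℝ) ^ (k - l) * (k.choose l : ℝ)) := by
    rw [sub_eq_add_neg, add_pow]
    refine Finset.sum_congr rfl fun l _ => ?_
    have hn1 : (-1 : PowerSeries ℝ) = PowerSeries.C (R := ℝ) (-1) := by
      rw [map_neg, map_one]
    rw [hn1, ← map_pow, ← map_natCast (PowerSeries.C (R := ℝ)) (k.choose l), mul_assoc, ← map_mul]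
  rw [hsub, map_sum]
  have hcl : ∀ l ∈ Finset.range (k + 1),
      PowerSeries.coeff (R := ℝ) n (F ^ l * PowerSeries.C (R := ℝ) ((-1 : ℝ) ^ (k - l) * (k.choose l : ℝ)))
        = PowerSeries.coeff (R := ℝ) n (F ^ l) * ((-1 : ℝ) ^ (k - l) * (k.choose l : ℝ)) :=
    fun l _ => PowerSeries.coeff_mul_C _ _ _
  rw [Finset.sum_congr rfl hcl]
  have hbbl : ∀ l : ℕ, DegStirAux.bb D n (l : ℝ) = ∑ j ∈ Finset.range (n / 2 + 1),
      (l : ℝ) ^ j * ((2 * j).factorial : ℝ) / (2 ^ j * (j.factorial : ℝ)) *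
        ∑ m ∈ Finset.Icc (2 * j) n, S1 m (2 * j) * St2 n m := by
    intro l
    unfold DegStirAux.bb
    rw [DegStirAux.sum_even_range n _ (fun q hq => by rw [DegStirAux.MM_odd hq]; ring)]
    refine Finset.sum_congr rfl fun j _ => ?_
    rw [DegStirAux.MM_two_mul]
    simp only [hDdef, DegStirAux.cc]
    ring
  rw [mul_sum, sum_div, mul_sum]
  refine Finset.sum_congr rfl fun l _ => ?_
  rw [← hbbl l, ← hpow l n]
  ring

end
end
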